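/- Fix \(D > 0\) and \(\Lambda_0 \in SO_3(\mathbb{R})\), let \(\mu\) be the Haar probability measure on \(SO_3(\mathbb{R})\), and define \(\Gamma_{\Lambda_0}(f) = \big(\int f\,\mathrm{d}\mu\big) M_{\Lambda_0} - f\) for \(f \in L^2(\mu)\). Define \(\mathrm{GCI}(\Lambda_0)\) as the set of \(\psi \in L^2(\mu)\) such that \(\int \Gamma_{\Lambda_0}(f)\,\psi\,\mathrm{d}\mu = 0\) for every \(f \in L^2(\mu)\) with \(\int f(A)\,\big(\tfrac{1}{2}\mathrm{Tr}(P^\mathsf{T}\Lambda_0^\mathsf{T} A)\big)\,\mathrm{d}\mu(A) = 0\) for all antisymmetric \(P\). Then \(\mathrm{GCI}(\Lambda_0)\) consists exactly of the functions of the form \(A \mapsto c + \tfrac{1}{2}\mathrm{Tr}(P^\mathsf{T}\Lambda_0^\mathsf{T} A)\) (\(\mu\)-almost everywhere) with \(c \in \mathbb{R}\) and \(P\) an antisymmetric matrix; i.e., \(\mathrm{GCI}(\Lambda_0)\) is the linear span of the constant function \(1\) and the functions \(\psi^P_{\Lambda_0}(A) = \tfrac{1}{2}\mathrm{Tr}(P^\mathsf{T}\Lambda_0^\mathsf{T}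 A)\) for \(P\) antisymmetric. -/

import Mathlib

open scoped Matrix
open MeasureTheory

noncomputable section

/-- The space of real 3×3 matrices. -/
abbrev Mat3 := Matrix (Fin 3) (Fin 3) ℝ

/-- The special orthogonal group `SO₃(ℝ)`. -/
def SO3T : Type := {A : Mat3 // Aᵀ * A = 1 ∧ A.det = 1}

namespace SO3T

instance : Group SO3T where
  mul A B := ⟨A.1 * B.1, by
    obtain ⟨hA1, hA2⟩ := A.2
    obtain ⟨hB1, hB2⟩ := B.2
    constructor
    · rw [Matrix.transpose_mul, Matrix.mul_assoc, ← Matrix.mul_assoc (A.1)ᵀ, hA1,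
        Matrix.one_mul, hB1]
    · rw [Matrix.det_mul, hA2, hB2, mul_one]⟩
  one := ⟨1, by simp⟩
  inv A := ⟨A.1ᵀ, by
    obtain ⟨hA1, hA2⟩ := A.2
    constructor
    · rw [Matrix.transpose_transpose]; exact mul_eq_one_comm.mp hA1
    · rw [Matrix.det_transpose]; exact hA2⟩
  mul_assoc a b c := Subtype.ext (mul_assoc a.1 b.1 c.1)
  one_mul a := Subtype.ext (one_mul a.1)
  mul_one a := Subtype.ext (mul_one a.1)
  inv_mul_cancel a := Subtype.ext a.2.1

instance : TopologicalSpace SO3T := instTopologicalSpaceSubtype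

instance : MeasurableSpace SO3T := borel SO3T

instance : BorelSpace SO3T := ⟨rfl⟩

end SO3T
namespace GCIAux

open Matrix

lemma mul_val (g A : SO3T) : (g * A).val = g.val * A.val := rfl

lemma inv_val (A : SO3T) : (A⁻¹).val = (A.val)ᵀ := rfl

lemma one_val : (1 : SO3T).val = 1 := rfl

lemma colsum (A : SO3T) (j : Fin 3) : (∑ i, A.val i j * A.val i j) = 1 := by
  have h := A.2.1
  have := congrFun (congrFun h j) j
  simpa [Matrix.mul_apply, Matrix.transpose_apply, Matrix.one_apply] using this

lemma rowsum (A : SO3T) (i : Fin 3) : (∑ j, A.val i j * A.val i j) = 1 := by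
  have h : A.val * (A.val)ᵀ = 1 := mul_eq_one_comm.mp A.2.1
  have := congrFun (congrFun h i) i
  simpa [Matrix.mul_apply, Matrix.transpose_apply, Matrix.one_apply] using this

lemma entry_sq_le (A : SO3T) (i j : Fin 3) : (A.val i j)^2 ≤ 1 := by
  have h := colsum A j
  have h1 : (A.val i j)^2 ≤ ∑ k, A.val k j * A.val k j := by
    rw [sq]
    exact Finset.single_le_sum (f := fun k => A.val k j * A.val k j)
      (fun k _ => mul_self_nonneg _) (Finset.mem_univ i)
  linarith

lemma entry_abs_le (A : SO3T) (i j : Fin 3) : |A.val i j| ≤ 1 := by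
  have := entry_sq_le A i j
  nlinarith [abs_nonneg (A.val i j), sq_abs (A.val i j)]

lemma trace_abs_le (A : SO3T) : |Matrix.trace A.val| ≤ 3 := by
  have h0 := entry_abs_le A 0 0
  have h1 := entry_abs_le A 1 1
  have h2 := entry_abs_le A 2 2
  have : Matrix.trace A.val = A.val 0 0 + A.val 1 1 + A.val 2 2 := by
    simp [Matrix.trace, Matrix.diag, Fin.sum_univ_three]
  rw [this]
  calc |A.val 0 0 + A.val 1 1 + A.val 2 2| ≤ |A.val 0 0| + |A.val 1 1| + |A.val 2 2| := by
        exact (abs_add_three _ _ _)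
    _ ≤ 3 := by linarith

instance : SecondCountableTopology Mat3 := by
  have h : SecondCountableTopology (Fin 3 → Fin 3 → ℝ) := inferInstance
  exact h

instance : T2Space SO3T := by
  have h : T2Space {A : Mat3 // Aᵀ * A = 1 ∧ A.det = 1} := inferInstance
  exact h

instance : SecondCountableTopology SO3T := by
  have h := TopologicalSpace.secondCountableTopology_induced SO3T Mat3 Subtype.val
  exact h

lemma continuous_val : Continuous (fun A : SO3T => A.val) := continuous_subtype_val

lemma continuous_entry (i j : Fin 3) : Continuous (fun A : SO3T => A.val i j) :=
  (continuous_apply j).comp ((continuous_apply i).comp continuous_val)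

lemma continuous_trace : Continuous (fun A : SO3T => Matrix.trace A.val) := by
  have : (fun A : SO3T => Matrix.trace A.val)
      = fun A : SO3T => A.val 0 0 + A.val 1 1 + A.val 2 2 := by
    funext A; simp [Matrix.trace, Matrix.diag, Fin.sum_univ_three]
  rw [this]
  exact ((continuous_entry 0 0).add (continuous_entry 1 1)).add (continuous_entry 2 2)

instance : CompactSpace SO3T := by
  have hsub : {A : Mat3 | Aᵀ * A = 1 ∧ A.det = 1}
      ⊆ (Set.univ : Set (Fin 3)).pi (fun _ => (Set.univ : Set (Fin 3)).pi
          (fun _ => Set.Icc (-1 : ℝ) 1)) := by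
    intro A hA
    intro i _ 
    intro j _
    have : |A i j| ≤ 1 := entry_abs_le ⟨A, hA⟩ i j
    exact abs_le.mp this
  have hK : IsCompact ((Set.univ : Set (Fin 3)).pi (fun _ => (Set.univ : Set (Fin 3)).pi
      (fun _ => Set.Icc (-1 : ℝ) 1)) : Set Mat3) := by
    apply isCompact_univ_pi
    intro i
    exact isCompact_univ_pi fun j => isCompact_Icc
  have hclosed : IsClosed {A : Mat3 | Aᵀ * A = 1 ∧ A.det = 1} := by
    have h1 : IsClosed {A : Mat3 | Aᵀ * A = 1} := by
      have : Continuous fun A : Mat3 => Aᵀ * A :=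
        (Continuous.matrix_transpose continuous_id).matrix_mul continuous_id
      exact isClosed_singleton.preimage this
    have h2 : IsClosed {A : Mat3 | A.det = 1} := by
      have : Continuous fun A : Mat3 => A.det := Continuous.matrix_det continuous_id
      exact isClosed_singleton.preimage this
    exact h1.inter h2
  exact isCompact_iff_compactSpace.mp (hK.of_isClosed_subset hclosed hsub)

lemma continuous_mul_left (g : SO3T) : Continuous (fun A : SO3T => g * A) := by
  apply Continuous.subtype_mk
  exact (continuous_const (y := g.val)).matrix_mul continuous_val

lemma continuous_mul_right (g : SO3T) : Continuous (fun A : SO3T => A * g) := by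
  apply Continuous.subtype_mk
  exact continuous_val.matrix_mul (continuous_const (y := g.val))

lemma continuous_inv : Continuous (fun A : SO3T => A⁻¹) := by
  apply Continuous.subtype_mk
  exact Continuous.matrix_transpose continuous_val

lemma integrable_cont {α : Type*} [TopologicalSpace α] [MeasurableSpace α]
    [OpensMeasurableSpace α] [T2Space α] [CompactSpace α]
    (ν : Measure α) [IsFiniteMeasure ν] (f : α → ℝ) (hf : Continuous f) :
    Integrable f ν :=
  hf.integrable_of_hasCompactSupport (IsClosed.isCompact (isClosed_tsupport f))

end GCIAux
namespace GCIAux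

set_option linter.unusedSectionVars false
variable (μ : Measure SO3T) [IsProbabilityMeasure μ]

lemma int_left (hinv : ∀ g : SO3T, μ.map (fun A => g * A) = μ)
    (g : SO3T) (f : SO3T → ℝ) (hf : AEStronglyMeasurable f μ) :
    ∫ x, f (g * x) ∂μ = ∫ x, f x ∂μ := by
  conv_rhs => rw [← hinv g]
  rw [integral_map ((continuous_mul_left g).measurable.aemeasurable)]
  rw [hinv g]; exact hf

lemma int_left' (hinv : ∀ g : SO3T, μ.map (fun A => g * A) = μ)
    (g : SO3T) (f : SO3T → ℝ) (hf : Continuous f) :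
    ∫ x, f (g * x) ∂μ = ∫ x, f x ∂μ :=
  int_left μ hinv g f hf.aestronglyMeasurable

lemma int_inv (hinv : ∀ g : SO3T, μ.map (fun A => g * A) = μ)
    (f : SO3T → ℝ) (hf : Continuous f) :
    ∫ x, f x⁻¹ ∂μ = ∫ x, f x ∂μ := by
  -- step (a): ∫ f (x⁻¹ * g) dμ(x) = ∫ f x⁻¹ dμ(x) for all g
  have ha : ∀ g : SO3T, ∫ x, f (x⁻¹ * g) ∂μ = ∫ x, f x⁻¹ ∂μ := by
    intro g
    have h1 : ∀ x : SO3T, f (x⁻¹ * g) = (fun y => f (y⁻¹)) (g⁻¹ * x) := by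
      intro x; simp [mul_inv_rev]
    simp only [h1]
    exact int_left' μ hinv g⁻¹ (fun y => f y⁻¹) (hf.comp continuous_inv)
  -- Fubini on F(y, x) = f (y⁻¹ * x)
  have hFc : Continuous (fun p : SO3T × SO3T => f (p.1⁻¹ * p.2)) := by
    apply hf.comp
    apply Continuous.subtype_mk
    exact (Continuous.matrix_transpose (continuous_val.comp continuous_fst)).matrix_mul
      (continuous_val.comp continuous_snd)
  have hFint : Integrable (fun p : SO3T × SO3T => f (p.1⁻¹ * p.2)) (μ.prod μ) :=
    integrable_cont (μ.prod μ) _ hFc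
  have hswap := integral_integral_swap (f := fun y x => f (y⁻¹ * x)) hFint
  have h2 : ∫ y, ∫ x, f (y⁻¹ * x) ∂μ ∂μ = ∫ x, f x ∂μ := by
    have : ∀ y : SO3T, ∫ x, f (y⁻¹ * x) ∂μ = ∫ x, f x ∂μ := fun y =>
      int_left' μ hinv y⁻¹ f hf
    simp only [this, integral_const, measure_univ, probReal_univ, ENNReal.toReal_one, one_smul]
  have h3 : ∫ x, ∫ y, f (y⁻¹ * x) ∂μ ∂μ = ∫ x, f x⁻¹ ∂μ := by
    have : ∀ x : SO3T, ∫ y, f (y⁻¹ * x) ∂μ = ∫ y, f y⁻¹ ∂μ := fun x => ha x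
    simp only [this, integral_const, measure_univ, probReal_univ, ENNReal.toReal_one, one_smul]
  rw [← h3, ← hswap, h2]

lemma int_right (hinv : ∀ g : SO3T, μ.map (fun A => g * A) = μ)
    (g : SO3T) (f : SO3T → ℝ) (hf : Continuous f) :
    ∫ x, f (x * g) ∂μ = ∫ x, f x ∂μ := by
  have h1 : ∫ x, f (x⁻¹ * g) ∂μ = ∫ x, f (x * g) ∂μ := by
    have := int_inv μ hinv (fun x => f (x * g)) (hf.comp (continuous_mul_right g))
    simpa using this
  have h2 : ∀ x : SO3T, f (x⁻¹ * g) = (fun y => f y⁻¹) (g⁻¹ * x) := by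
    intro x; simp [mul_inv_rev]
  have h3 : ∫ x, f (x⁻¹ * g) ∂μ = ∫ x, f x⁻¹ ∂μ := by
    simp only [h2]
    exact int_left' μ hinv g⁻¹ (fun y => f y⁻¹) (hf.comp continuous_inv)
  rw [← h1, h3, int_inv μ hinv f hf]

end GCIAux
namespace GCIAux

/-- sign-diagonal element of SO3: +1 at position k, -1 elsewhere -/
def sg (k : Fin 3) : SO3T :=
  ⟨Matrix.diagonal (fun m => if m = k then (1 : ℝ) else -1), by
    constructor
    · rw [Matrix.diagonal_transpose, Matrix.diagonal_mul_diagonal]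
      have h : ∀ m : Fin 3, (if m = k then (1:ℝ) else -1) * (if m = k then (1:ℝ) else -1) = 1 := by
        intro m; by_cases h : m = k <;> simp [h]
      simp only [h]
      exact Matrix.diagonal_one
    · rw [Matrix.det_diagonal, Fin.prod_univ_three]
      fin_cases k <;> simp [Fin.ext_iff]⟩

lemma sg_mul_entry (k : Fin 3) (A : SO3T) (i j : Fin 3) :
    ((sg k) * A).val i j = (if i = k then (1:ℝ) else -1) * A.val i j := by
  rw [mul_val]; exact Matrix.diagonal_mul _ _ i j

lemma mul_sg_entry (k : Fin 3) (A : SO3T) (i j : Fin 3) :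
    (A * (sg k)).val i j = A.val i j * (if j = k then (1:ℝ) else -1) := by
  rw [mul_val]; exact Matrix.mul_diagonal _ _ i j

lemma sg_mul_sg (k : Fin 3) : (sg k).val * (sg k).val = 1 := by
  show Matrix.diagonal _ * Matrix.diagonal _ = 1
  rw [Matrix.diagonal_mul_diagonal]
  have h : ∀ m : Fin 3, (if m = k then (1:ℝ) else -1) * (if m = k then (1:ℝ) else -1) = 1 := by
    intro m; by_cases h : m = k <;> simp [h]
  simp only [h]
  exact Matrix.diagonal_one

/-- cyclic permutation element of SO3 -/
def cyc : SO3T :=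
  ⟨!![0,1,0;0,0,1;1,0,0], by
    constructor
    · have ht : (!![0,1,0;0,0,1;1,0,0] : Mat3)ᵀ = !![0,0,1;1,0,0;0,1,0] := by
        ext i j; fin_cases i <;> fin_cases j <;> rfl
      rw [ht, Matrix.mul_fin_three, Matrix.one_fin_three]
      norm_num
    · simp [Matrix.det_fin_three]⟩

lemma cyc_mul_entry (A : SO3T) (i j : Fin 3) :
    (cyc * A).val i j = A.val (![1,2,0] i) j := by
  rw [mul_val]
  show (cyc.val * A.val) i j = _
  fin_cases i <;> simp [cyc, Matrix.mul_apply, Fin.sum_univ_three, Matrix.vecHead, Matrix.vecTail]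

lemma mul_cyc_entry (A : SO3T) (i j : Fin 3) :
    (A * cyc).val i j = A.val i (![2,0,1] j) := by
  rw [mul_val]
  show (A.val * cyc.val) i j = _
  fin_cases j <;> simp [cyc, Matrix.mul_apply, Fin.sum_univ_three, Matrix.vecHead, Matrix.vecTail]

section Moments

set_option linter.unusedSectionVars false

variable (μ : Measure SO3T) [IsProbabilityMeasure μ]

lemma M1 (hinv : ∀ g : SO3T, μ.map (fun A => g * A) = μ) (i j : Fin 3) :
    ∫ A, A.val i j ∂μ = 0 := by
  obtain ⟨k, hk⟩ : ∃ k : Fin 3, i ≠ k := by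
    fin_cases i
    exacts [⟨1, by decide⟩, ⟨0, by decide⟩, ⟨0, by decide⟩]
  have h := int_left' μ hinv (sg k) (fun A => A.val i j) (continuous_entry i j)
  have e : ∀ A : SO3T, (fun A : SO3T => A.val i j) (sg k * A) = -(A.val i j) := by
    intro A
    simp only [sg_mul_entry, if_neg hk]
    ring
  simp only [e] at h
  rw [integral_neg] at h
  linarith

lemma M2a (hinv : ∀ g : SO3T, μ.map (fun A => g * A) = μ) (i j k l : Fin 3) (hik : i ≠ k) :
    ∫ A, A.val i j * A.val k l ∂μ = 0 := by
  have h := int_left' μ hinv (sg i) (fun A => A.val i j * A.val k l)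
    ((continuous_entry i j).mul (continuous_entry k l))
  have e : ∀ A : SO3T, (fun A : SO3T => A.val i j * A.val k l) (sg i * A)
      = -(A.val i j * A.val k l) := by
    intro A
    simp only [sg_mul_entry, if_pos rfl, if_neg (Ne.symm hik), if_true]
    ring
  simp only [e] at h
  rw [integral_neg] at h
  linarith

lemma M2b (hinv : ∀ g : SO3T, μ.map (fun A => g * A) = μ) (i j k l : Fin 3) (hjl : j ≠ l) :
    ∫ A, A.val i j * A.val k l ∂μ = 0 := by
  have h := int_right μ hinv (sg j) (fun A => A.val i j * A.val k l)
    ((continuous_entry i j).mul (continuous_entry k l))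
  have e : ∀ A : SO3T, (fun A : SO3T => A.val i j * A.val k l) (A * sg j)
      = -(A.val i j * A.val k l) := by
    intro A
    simp only [mul_sg_entry, if_pos rfl, if_neg (Ne.symm hjl), if_true]
    ring
  simp only [e] at h
  rw [integral_neg] at h
  linarith

lemma M2c (hinv : ∀ g : SO3T, μ.map (fun A => g * A) = μ) (i j : Fin 3) :
    ∫ A, A.val i j * A.val i j ∂μ = 1/3 := by
  have hrow : ∀ i j : Fin 3, ∫ A, A.val (![1,2,0] i) j * A.val (![1,2,0] i) j ∂μ
      = ∫ A, A.val i j * A.val i j ∂μ := by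
    intro i j
    have h := int_left' μ hinv cyc (fun A => A.val i j * A.val i j)
      ((continuous_entry i j).mul (continuous_entry i j))
    simp only [cyc_mul_entry] at h
    exact h
  have hcol : ∀ i j : Fin 3, ∫ A, A.val i (![2,0,1] j) * A.val i (![2,0,1] j) ∂μ
      = ∫ A, A.val i j * A.val i j ∂μ := by
    intro i j
    have h := int_right μ hinv cyc (fun A => A.val i j * A.val i j)
      ((continuous_entry i j).mul (continuous_entry i j))
    simp only [mul_cyc_entry] at h
    exact h
  have hall : ∀ i j : Fin 3, ∫ A, A.val i j * A.val i j ∂μ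
      = ∫ A, A.val 0 0 * A.val 0 0 ∂μ := by
    intro i j
    fin_cases i <;> fin_cases j
    exacts [rfl,
      (hcol 0 2).trans (hcol 0 0),
      hcol 0 0,
      hrow 0 0,
      (hcol 1 2).trans ((hcol 1 0).trans (hrow 0 0)),
      (hcol 1 0).trans (hrow 0 0),
      (hrow 1 0).trans (hrow 0 0),
      (hcol 2 2).trans ((hcol 2 0).trans ((hrow 1 0).trans (hrow 0 0))),
      (hcol 2 0).trans ((hrow 1 0).trans (hrow 0 0))]
  have hint : ∀ i j : Fin 3, Integrable (fun A : SO3T => A.val i j * A.val i j) μ :=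
    fun i j => integrable_cont μ _ ((continuous_entry i j).mul (continuous_entry i j))
  have hsum : ∫ A : SO3T, (A.val 0 0 * A.val 0 0 + A.val 0 1 * A.val 0 1
      + A.val 0 2 * A.val 0 2 : ℝ) ∂μ = 1 := by
    have e : ∀ A : SO3T, (A.val 0 0 * A.val 0 0 + A.val 0 1 * A.val 0 1
        + A.val 0 2 * A.val 0 2 : ℝ) = 1 := by
      intro A
      have h := rowsum A 0
      rw [Fin.sum_univ_three] at h
      linarith
    simp only [e]
    simp
  have e1 : ∫ A : SO3T, ((A.val 0 0 * A.val 0 0 + A.val 0 1 * A.val 0 1)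
        + A.val 0 2 * A.val 0 2 : ℝ) ∂μ
      = (∫ A : SO3T, (A.val 0 0 * A.val 0 0 + A.val 0 1 * A.val 0 1 : ℝ) ∂μ)
        + ∫ A, A.val 0 2 * A.val 0 2 ∂μ :=
    integral_add ((hint 0 0).add (hint 0 1)) (hint 0 2)
  have e2 : ∫ A : SO3T, (A.val 0 0 * A.val 0 0 + A.val 0 1 * A.val 0 1 : ℝ) ∂μ
      = (∫ A, A.val 0 0 * A.val 0 0 ∂μ) + ∫ A, A.val 0 1 * A.val 0 1 ∂μ :=
    integral_add (hint 0 0) (hint 0 1)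
  rw [e1, e2, hall 0 1, hall 0 2] at hsum
  rw [hall i j]
  linarith

lemma M2 (hinv : ∀ g : SO3T, μ.map (fun A => g * A) = μ) (p q : Fin 3 × Fin 3) :
    ∫ A, A.val p.1 p.2 * A.val q.1 q.2 ∂μ = if q = p then 1/3 else 0 := by
  by_cases h : q = p
  · subst h; rw [if_pos rfl]; exact M2c μ hinv q.1 q.2
  · rw [if_neg h]
    by_cases h1 : p.1 = q.1
    · have h2 : p.2 ≠ q.2 := by
        intro h2; exact h (Prod.ext h1.symm h2.symm)
      exact M2b μ hinv p.1 p.2 q.1 q.2 h2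
    · exact M2a μ hinv p.1 p.2 q.1 q.2 h1

lemma expw (hinv : ∀ g : SO3T, μ.map (fun A => g * A) = μ) (D : ℝ) (i j : Fin 3) (hij : i ≠ j) :
    ∫ A, Real.exp (1 / (2 * D) * Matrix.trace A.val) * A.val i j ∂μ = 0 := by
  have hfc : Continuous (fun A : SO3T => Real.exp (1 / (2 * D) * Matrix.trace A.val)
      * A.val i j) :=
    (Real.continuous_exp.comp (continuous_const.mul continuous_trace)).mul
      (continuous_entry i j)
  set f : SO3T → ℝ := fun A => Real.exp (1 / (2 * D) * Matrix.trace A.val) * A.val i j with hf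
  have h1 : ∫ A, f (sg i * A * sg i) ∂μ = ∫ A, f A ∂μ := by
    have e1 : ∀ A : SO3T, f (sg i * A * sg i) = (fun B => f (sg i * B)) (A * sg i) := by
      intro A; rw [mul_assoc]
    rw [funext e1]
    have h2 := int_right μ hinv (sg i) (fun B => f (sg i * B))
      (hfc.comp (continuous_mul_left (sg i)))
    rw [h2]
    exact int_left' μ hinv (sg i) f hfc
  have e2 : ∀ A : SO3T, f (sg i * A * sg i) = - f A := by
    intro A
    have htr : Matrix.trace ((sg i * A * sg i).val) = Matrix.trace A.val := by
      rw [mul_val, mul_val, Matrix.trace_mul_cycle, sg_mul_sg, Matrix.one_mul]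
    have hen : (sg i * A * sg i).val i j = - A.val i j := by
      rw [mul_sg_entry, sg_mul_entry, if_pos rfl, if_neg (fun h => hij h.symm)]
      ring
    rw [hf]
    simp only []
    rw [htr, hen]
    ring
  rw [funext e2, integral_neg] at h1
  linarith

end Moments

end GCIAux
namespace GCIAux

instance : Nonempty SO3T := ⟨1⟩

lemma trace_transpose_mul (P M : Mat3) :
    Matrix.trace (Pᵀ * M) = ∑ p : Fin 3 × Fin 3, P p.1 p.2 * M p.1 p.2 := by
  rw [Fintype.sum_prod_type]
  simp only [Matrix.trace, Matrix.diag, Matrix.mul_apply, Matrix.transpose_apply]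
  exact Finset.sum_comm

/-- the candidate GCI functions -/
def phi (Λ0 : SO3T) (P : Mat3) (A : SO3T) : ℝ :=
  (1/2 : ℝ) * Matrix.trace (Pᵀ * (Λ0.val)ᵀ * A.val)

lemma continuous_traceN (N : Mat3) : Continuous (fun A : SO3T => Matrix.trace (N * A.val)) := by
  have e : (fun A : SO3T => Matrix.trace (N * A.val))
      = fun A => ∑ i : Fin 3, ∑ j : Fin 3, N i j * A.val j i := by
    funext A
    simp [Matrix.trace, Matrix.diag, Matrix.mul_apply]
  rw [e]
  exact continuous_finset_sum _ fun i _ =>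
    continuous_finset_sum _ fun j _ => continuous_const.mul (continuous_entry j i)

lemma continuous_phi (Λ0 : SO3T) (P : Mat3) : Continuous (phi Λ0 P) :=
  continuous_const.mul (continuous_traceN (Pᵀ * (Λ0.val)ᵀ))

lemma continuous_expM (D : ℝ) (Λ0 : SO3T) :
    Continuous (fun A : SO3T => Real.exp (1 / (2 * D) * Matrix.trace ((Λ0.val)ᵀ * A.val))) :=
  Real.continuous_exp.comp (continuous_const.mul (continuous_traceN ((Λ0.val)ᵀ)))

lemma phi_shift (Λ0 : SO3T) (P : Mat3) (A : SO3T) :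
    phi Λ0 P A = (fun B : SO3T => (1/2 : ℝ) * Matrix.trace (Pᵀ * B.val)) (Λ0⁻¹ * A) := by
  show (1/2 : ℝ) * Matrix.trace (Pᵀ * (Λ0.val)ᵀ * A.val)
      = (1/2 : ℝ) * Matrix.trace (Pᵀ * ((Λ0.val)ᵀ * A.val))
  rw [Matrix.mul_assoc]

lemma exp_shift (D : ℝ) (Λ0 : SO3T) (A : SO3T) :
    Real.exp (1 / (2 * D) * Matrix.trace ((Λ0.val)ᵀ * A.val))
      = (fun B : SO3T => Real.exp (1 / (2 * D) * Matrix.trace B.val)) (Λ0⁻¹ * A) := rfl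

section IntLemmas

set_option linter.unusedSectionVars false

variable (μ : Measure SO3T) [IsProbabilityMeasure μ]

lemma memLp_cont (f : SO3T → ℝ) (hf : Continuous f) (p : ENNReal) : MemLp f p μ := by
  obtain ⟨x0, -, hx0⟩ := isCompact_univ.exists_isMaxOn (Set.univ_nonempty)
    (hf.norm.continuousOn)
  exact MemLp.of_bound hf.aestronglyMeasurable ‖f x0‖
    (Filter.Eventually.of_forall fun x => hx0 (Set.mem_univ x))

lemma integrable_L2_mul (f g : SO3T → ℝ) (hf : MemLp f 2 μ) (hg : MemLp g 2 μ) :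
    Integrable (fun x => f x * g x) μ := by
  have h := (((hf.add hg).integrable_sq.sub hf.integrable_sq).sub hg.integrable_sq).div_const 2
  apply h.congr
  apply Filter.Eventually.of_forall
  intro x
  simp only [Pi.sub_apply, Pi.add_apply]
  ring

-- F5 : normalization
lemma F5 (hinv : ∀ g : SO3T, μ.map (fun A => g * A) = μ) (D : ℝ) (Λ0 : SO3T) :
    ∫ A, Real.exp (1 / (2 * D) * Matrix.trace ((Λ0.val)ᵀ * A.val)) ∂μ
      = ∫ A, Real.exp (1 / (2 * D) * Matrix.trace A.val) ∂μ := by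
  simp only [exp_shift D Λ0]
  exact int_left' μ hinv Λ0⁻¹ _
    (Real.continuous_exp.comp (continuous_const.mul continuous_trace))

lemma Zpos (D : ℝ) (hD : 0 < D) :
    0 < ∫ A : SO3T, Real.exp (1 / (2 * D) * Matrix.trace A.val) ∂μ := by
  have hint : Integrable (fun A : SO3T => Real.exp (1 / (2 * D) * Matrix.trace A.val)) μ :=
    integrable_cont μ _ (Real.continuous_exp.comp (continuous_const.mul continuous_trace))
  have hlb : ∀ A : SO3T, Real.exp (-(3 / (2 * D)))
      ≤ Real.exp (1 / (2 * D) * Matrix.trace A.val) := by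
    intro A
    apply Real.exp_le_exp.mpr
    have h1 : -3 ≤ Matrix.trace A.val := by
      have := abs_le.mp (trace_abs_le A)
      linarith [this.1]
    have h2 : 0 < 1 / (2 * D) := by positivity
    calc -(3 / (2 * D)) = 1 / (2 * D) * (-3) := by ring
      _ ≤ 1 / (2 * D) * Matrix.trace A.val := by nlinarith
  have hmono := integral_mono (integrable_const _) hint hlb
  rw [integral_const] at hmono
  simp only [measure_univ, probReal_univ, ENNReal.toReal_one, one_smul] at hmono
  calc (0:ℝ) < Real.exp (-(3 / (2 * D))) := Real.exp_pos _
    _ ≤ _ := hmono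

-- F2 : phi has zero mean
lemma F2 (hinv : ∀ g : SO3T, μ.map (fun A => g * A) = μ) (Λ0 : SO3T) (P : Mat3) :
    ∫ A, phi Λ0 P A ∂μ = 0 := by
  simp only [phi_shift]
  rw [int_left' μ hinv Λ0⁻¹ (fun B : SO3T => (1/2 : ℝ) * Matrix.trace (Pᵀ * B.val)) (continuous_const.mul (continuous_traceN Pᵀ))]
  have e : ∀ B : SO3T, (1/2 : ℝ) * Matrix.trace (Pᵀ * B.val)
      = ∑ p : Fin 3 × Fin 3, (P p.1 p.2 / 2) * B.val p.1 p.2 := by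
    intro B
    rw [trace_transpose_mul, Finset.mul_sum]
    exact Finset.sum_congr rfl fun p _ => by ring
  simp only [e]
  rw [integral_finset_sum _ (fun p _ => integrable_cont μ (fun B : SO3T => (P p.1 p.2 / 2) * B.val p.1 p.2)
    (continuous_const.mul (continuous_entry p.1 p.2)))]
  apply Finset.sum_eq_zero
  intro p _
  rw [integral_const_mul, M1 μ hinv p.1 p.2, mul_zero]

-- F3 : second moment of phi
lemma F3 (hinv : ∀ g : SO3T, μ.map (fun A => g * A) = μ) (Λ0 : SO3T) (P Q : Mat3) :
    ∫ A, phi Λ0 P A * phi Λ0 Q A ∂μ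
      = (∑ p : Fin 3 × Fin 3, P p.1 p.2 * Q p.1 p.2) / 12 := by
  simp only [phi_shift]
  rw [int_left' μ hinv Λ0⁻¹ (fun B : SO3T => ((1/2 : ℝ) * Matrix.trace (Pᵀ * B.val)) * ((1/2 : ℝ) * Matrix.trace (Qᵀ * B.val))) ((continuous_const.mul (continuous_traceN Pᵀ)).mul
    (continuous_const.mul (continuous_traceN Qᵀ)))]
  have e : ∀ B : SO3T, ((1/2 : ℝ) * Matrix.trace (Pᵀ * B.val))
        * ((1/2 : ℝ) * Matrix.trace (Qᵀ * B.val))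
      = ∑ p : Fin 3 × Fin 3, ∑ q : Fin 3 × Fin 3,
          (P p.1 p.2 * Q q.1 q.2 / 4) * (B.val p.1 p.2 * B.val q.1 q.2) := by
    intro B
    rw [trace_transpose_mul, trace_transpose_mul]
    have h4 : ∀ x y : ℝ, (1/2 * x) * (1/2 * y) = x * y / 4 := fun x y => by ring
    rw [h4, Finset.sum_mul_sum, Finset.sum_div]
    refine Finset.sum_congr rfl fun p _ => ?_
    rw [Finset.sum_div]
    exact Finset.sum_congr rfl fun q _ => by ring
  simp only [e]
  rw [integral_finset_sum _ (fun p _ => integrable_cont μ (fun B : SO3T => ∑ q : Fin 3 × Fin 3,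
          (P p.1 p.2 * Q q.1 q.2 / 4) * (B.val p.1 p.2 * B.val q.1 q.2))
    (continuous_finset_sum _ fun q _ => continuous_const.mul
      ((continuous_entry p.1 p.2).mul (continuous_entry q.1 q.2))))]
  have e2 : ∀ p : Fin 3 × Fin 3,
      ∫ B, (∑ q : Fin 3 × Fin 3,
        (P p.1 p.2 * Q q.1 q.2 / 4) * (B.val p.1 p.2 * B.val q.1 q.2)) ∂μ
      = P p.1 p.2 * Q p.1 p.2 / 12 := by
    intro p
    rw [integral_finset_sum _ (fun q _ => integrable_cont μ (fun B : SO3T => (P p.1 p.2 * Q q.1 q.2 / 4) * (B.val p.1 p.2 * B.val q.1 q.2))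
      (continuous_const.mul ((continuous_entry p.1 p.2).mul (continuous_entry q.1 q.2))))]
    have e3 : ∀ q : Fin 3 × Fin 3,
        ∫ B, (P p.1 p.2 * Q q.1 q.2 / 4) * (B.val p.1 p.2 * B.val q.1 q.2) ∂μ
        = if q = p then P p.1 p.2 * Q p.1 p.2 / 12 else 0 := by
      intro q
      rw [integral_const_mul, M2 μ hinv p q]
      by_cases h : q = p
      · subst h; rw [if_pos rfl, if_pos rfl]; ring
      · rw [if_neg h, if_neg h, mul_zero]
    simp only [e3]
    rw [Finset.sum_ite_eq' Finset.univ p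
      (fun _ => P p.1 p.2 * Q p.1 p.2 / 12), if_pos (Finset.mem_univ p)]
  simp only [e2]
  rw [← Finset.sum_div]

-- F4 : exp weight orthogonal to antisymmetric phi
lemma F4 (hinv : ∀ g : SO3T, μ.map (fun A => g * A) = μ) (D : ℝ) (Λ0 : SO3T)
    (P : Mat3) (hP : Pᵀ = -P) :
    ∫ A, Real.exp (1 / (2 * D) * Matrix.trace ((Λ0.val)ᵀ * A.val)) * phi Λ0 P A ∂μ = 0 := by
  simp only [phi_shift, exp_shift D Λ0]
  have hG : Continuous (fun B : SO3T => Real.exp (1 / (2 * D) * Matrix.trace B.val)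
      * ((1/2 : ℝ) * Matrix.trace (Pᵀ * B.val))) := by
    exact (Real.continuous_exp.comp (continuous_const.mul continuous_trace)).mul
      (continuous_const.mul (continuous_traceN Pᵀ))
  rw [int_left' μ hinv Λ0⁻¹ _ hG]
  have e : ∀ B : SO3T, Real.exp (1 / (2 * D) * Matrix.trace B.val)
        * ((1/2 : ℝ) * Matrix.trace (Pᵀ * B.val))
      = ∑ p : Fin 3 × Fin 3, (P p.1 p.2 / 2)
          * (Real.exp (1 / (2 * D) * Matrix.trace B.val) * B.val p.1 p.2) := by
    intro B
    rw [trace_transpose_mul, Finset.mul_sum, Finset.mul_sum]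
    exact Finset.sum_congr rfl fun p _ => by ring
  simp only [e]
  rw [integral_finset_sum]
  swap
  · intro p _
    exact integrable_cont μ _ (by exact continuous_const.mul ((Real.continuous_exp.comp
      (continuous_const.mul continuous_trace)).mul (continuous_entry p.1 p.2)))
  apply Finset.sum_eq_zero
  intro p _
  rw [integral_const_mul]
  by_cases h : p.1 = p.2
  · have hdiag : P p.1 p.2 = 0 := by
      have h1 := congrFun (congrFun hP p.1) p.2
      simp only [Matrix.transpose_apply, Matrix.neg_apply] at h1
      rw [h] at h1 ⊢
      linarith
    rw [hdiag]
    norm_num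
  · rw [expw μ hinv D p.1 p.2 h, mul_zero]

end IntLemmas

end GCIAux
namespace GCIAux

lemma continuous_Centry (Λ0 : SO3T) (i j : Fin 3) :
    Continuous (fun A : SO3T => ((Λ0.val)ᵀ * A.val) i j) := by
  exact (continuous_entry i j).comp (continuous_mul_left Λ0⁻¹)

lemma cont_bound (f : SO3T → ℝ) (hf : Continuous f) : ∃ C, ∀ x, ‖f x‖ ≤ C := by
  obtain ⟨x0, -, hx0⟩ := isCompact_univ.exists_isMaxOn (Set.univ_nonempty)
    (hf.norm.continuousOn)
  exact ⟨‖f x0‖, fun x => hx0 (Set.mem_univ x)⟩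

end GCIAux

open GCIAux in
theorem GCI_description_jump_model' (D : ℝ) (hD : 0 < D)
    (μ : Measure SO3T) [IsProbabilityMeasure μ]
    (hinv : ∀ g : SO3T, μ.map (fun A => g * A) = μ)
    (Z : ℝ) (hZ : Z = ∫ A : SO3T, Real.exp (1 / (2 * D) * Matrix.trace A.val) ∂μ)
    (Λ0 : SO3T) (ψ : SO3T → ℝ) (hψ : MemLp ψ 2 μ) :
    (∀ f : SO3T → ℝ, MemLp f 2 μ →
        (∀ P : Mat3, Pᵀ = -P →
          ∫ A, f A * ((1 / 2 : ℝ) * Matrix.trace (Pᵀ * (Λ0.val)ᵀ * A.val)) ∂μ = 0) →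
        ∫ A, ((∫ B, f B ∂μ) *
            (Z⁻¹ * Real.exp (1 / (2 * D) * Matrix.trace ((Λ0.val)ᵀ * A.val))) - f A) * ψ A ∂μ
          = 0)
      ↔ ∃ (c : ℝ) (P : Mat3), Pᵀ = -P ∧
          ∀ᵐ A ∂μ, ψ A = c + (1 / 2 : ℝ) * Matrix.trace (Pᵀ * (Λ0.val)ᵀ * A.val) := by
  classical
  have hZpos : 0 < Z := hZ ▸ Zpos μ D hD
  have hψint : Integrable ψ μ := hψ.integrable (by norm_num)
  have hexpcont : Continuous
      (fun A : SO3T => Real.exp (1 / (2 * D) * Matrix.trace ((Λ0.val)ᵀ * A.val))) :=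
    continuous_expM D Λ0
  have hMcont : Continuous
      (fun A : SO3T => Z⁻¹ * Real.exp (1 / (2 * D) * Matrix.trace ((Λ0.val)ᵀ * A.val))) :=
    continuous_const.mul hexpcont
  -- normalization of the von Mises density
  have hMint : ∫ A, Z⁻¹ * Real.exp (1 / (2 * D) * Matrix.trace ((Λ0.val)ᵀ * A.val)) ∂μ
      = 1 := by
    rw [integral_const_mul, F5 μ hinv D Λ0, ← hZ]
    field_simp
  -- orthogonality of the density with antisymmetric phi
  have hMphi : ∀ P : Mat3, Pᵀ = -P →
      ∫ A, (Z⁻¹ * Real.exp (1 / (2 * D) * Matrix.trace ((Λ0.val)ᵀ * A.val)))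
        * phi Λ0 P A ∂μ = 0 := by
    intro P hP
    have e : ∀ A : SO3T,
        (Z⁻¹ * Real.exp (1 / (2 * D) * Matrix.trace ((Λ0.val)ᵀ * A.val))) * phi Λ0 P A
        = Z⁻¹ * (Real.exp (1 / (2 * D) * Matrix.trace ((Λ0.val)ᵀ * A.val)) * phi Λ0 P A) :=
      fun A => by ring
    simp only [e]
    rw [integral_const_mul, F4 μ hinv D Λ0 P hP, mul_zero]
  constructor
  · -- forward direction
    intro H
    set c : ℝ := ∫ A, (Z⁻¹ * Real.exp (1 / (2 * D) * Matrix.trace ((Λ0.val)ᵀ * A.val)))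
      * ψ A ∂μ with hc
    set m : Mat3 := Matrix.of
      (fun i j => ∫ A, ψ A * ((1/2 : ℝ) * ((Λ0.val)ᵀ * A.val) i j) ∂μ) with hm
    set P : Mat3 := (6 : ℝ) • (m - mᵀ) with hPdef
    have hmval : ∀ p : Fin 3 × Fin 3,
        m p.1 p.2 = ∫ A, ψ A * ((1/2 : ℝ) * ((Λ0.val)ᵀ * A.val) p.1 p.2) ∂μ := fun p => rfl
    have hPanti : Pᵀ = -P := by
      rw [hPdef]
      ext i j
      simp only [Matrix.transpose_apply, Matrix.smul_apply, Matrix.sub_apply,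
        Matrix.neg_apply, smul_eq_mul]
      ring
    have hPval : ∀ p : Fin 3 × Fin 3, P p.1 p.2 = 6 * (m p.1 p.2 - m p.2 p.1) := by
      intro p
      rw [hPdef]
      simp only [Matrix.smul_apply, Matrix.sub_apply, Matrix.transpose_apply, smul_eq_mul]
    have hbdd : ∀ (g : SO3T → ℝ), Continuous g → Integrable (fun A => ψ A * g A) μ :=
      fun g hg => integrable_L2_mul μ ψ g hψ (memLp_cont μ g hg 2)
    -- pairing of ψ with phi
    have hpair : ∀ Q : Mat3, ∫ A, ψ A * phi Λ0 Q A ∂μ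
        = ∑ p : Fin 3 × Fin 3, Q p.1 p.2 * m p.1 p.2 := by
      intro Q
      have e : ∀ A : SO3T, ψ A * phi Λ0 Q A
          = ∑ p : Fin 3 × Fin 3,
              Q p.1 p.2 * (ψ A * ((1/2 : ℝ) * ((Λ0.val)ᵀ * A.val) p.1 p.2)) := by
        intro A
        have e0 : phi Λ0 Q A = (1/2 : ℝ) * Matrix.trace (Qᵀ * ((Λ0.val)ᵀ * A.val)) := by
          show (1/2 : ℝ) * Matrix.trace (Qᵀ * (Λ0.val)ᵀ * A.val) = _
          rw [Matrix.mul_assoc]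
        rw [e0, trace_transpose_mul, Finset.mul_sum, Finset.mul_sum]
        exact Finset.sum_congr rfl fun p _ => by ring
      simp only [e]
      rw [integral_finset_sum]
      swap
      · intro p _
        exact (hbdd _ (continuous_const.mul (continuous_Centry Λ0 p.1 p.2))).const_mul _
      refine Finset.sum_congr rfl fun p _ => ?_
      rw [integral_const_mul, ← hmval p]
    -- the test function f
    set f : SO3T → ℝ := fun A => ψ A - c - phi Λ0 P A with hfdef
    have hphiL2 : MemLp (phi Λ0 P) 2 μ := memLp_cont μ _ (continuous_phi Λ0 P) 2
    have hfL2 : MemLp f 2 μ := by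
      exact (hψ.sub (memLp_const c)).sub hphiL2
    have hfint : Integrable f μ := hfL2.integrable (by norm_num)
    -- f is orthogonal to all antisymmetric phi
    have hforth : ∀ Q : Mat3, Qᵀ = -Q → ∫ A, f A * phi Λ0 Q A ∂μ = 0 := by
      intro Q hQ
      have hIψ : Integrable (fun A => ψ A * phi Λ0 Q A) μ :=
        hbdd _ (continuous_phi Λ0 Q)
      have hIc : Integrable (fun A => c * phi Λ0 Q A) μ :=
        (integrable_cont μ _ (continuous_phi Λ0 Q)).const_mul c
      have hIpp : Integrable (fun A => phi Λ0 P A * phi Λ0 Q A) μ :=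
        integrable_cont μ _ ((continuous_phi Λ0 P).mul (continuous_phi Λ0 Q))
      have e : ∀ A : SO3T, f A * phi Λ0 Q A
          = ψ A * phi Λ0 Q A - c * phi Λ0 Q A - phi Λ0 P A * phi Λ0 Q A := by
        intro A; rw [hfdef]; ring
      have h1 : ∫ A, f A * phi Λ0 Q A ∂μ
          = (∫ A, ψ A * phi Λ0 Q A ∂μ) - (∫ A, c * phi Λ0 Q A ∂μ)
            - ∫ A, phi Λ0 P A * phi Λ0 Q A ∂μ := by
        simp only [e]
        have i1 : ∫ A, ((ψ A * phi Λ0 Q A - c * phi Λ0 Q A) - phi Λ0 P A * phi Λ0 Q A) ∂μ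
            = (∫ A, (ψ A * phi Λ0 Q A - c * phi Λ0 Q A) ∂μ)
              - ∫ A, phi Λ0 P A * phi Λ0 Q A ∂μ := integral_sub (hIψ.sub hIc) hIpp
        have i2 : ∫ A, (ψ A * phi Λ0 Q A - c * phi Λ0 Q A) ∂μ
            = (∫ A, ψ A * phi Λ0 Q A ∂μ) - ∫ A, c * phi Λ0 Q A ∂μ := integral_sub hIψ hIc
        rw [i1, i2]
      rw [h1, hpair Q, F3 μ hinv Λ0 P Q]
      have h2 : ∫ A, c * phi Λ0 Q A ∂μ = 0 := by
        rw [integral_const_mul, F2 μ hinv Λ0 Q, mul_zero]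
      rw [h2]
      -- algebra
      have hQswap : ∀ p : Fin 3 × Fin 3, Q p.2 p.1 = -Q p.1 p.2 := by
        intro p
        have h3 := congrFun (congrFun hQ p.1) p.2
        simpa [Matrix.transpose_apply, Matrix.neg_apply] using h3
      have e1 : ∀ p : Fin 3 × Fin 3, P p.1 p.2 * Q p.1 p.2 / 12
          = m p.1 p.2 * Q p.1 p.2 / 2 - m p.2 p.1 * Q p.1 p.2 / 2 := by
        intro p; rw [hPval p]; ring
      have e2 : ∑ p : Fin 3 × Fin 3, m p.2 p.1 * Q p.1 p.2 / 2
          = ∑ p : Fin 3 × Fin 3, -(m p.1 p.2 * Q p.1 p.2 / 2) := by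
        apply Fintype.sum_equiv (Equiv.prodComm (Fin 3) (Fin 3))
        intro p
        show m p.2 p.1 * Q p.1 p.2 / 2 = -(m p.2 p.1 * Q p.2 p.1 / 2)
        rw [hQswap p]
        ring
      rw [Finset.sum_div]
      simp only [e1]
      rw [Finset.sum_sub_distrib, e2, Finset.sum_neg_distrib]
      have e3 : ∑ p : Fin 3 × Fin 3, Q p.1 p.2 * m p.1 p.2
          = ∑ p : Fin 3 × Fin 3, m p.1 p.2 * Q p.1 p.2 / 2
            + ∑ p : Fin 3 × Fin 3, m p.1 p.2 * Q p.1 p.2 / 2 := by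
        rw [← Finset.sum_add_distrib]
        exact Finset.sum_congr rfl fun p _ => by ring
      rw [e3]
      ring
    -- apply the GCI hypothesis
    have hHf := H f hfL2 hforth
    have hMψ : Integrable (fun A =>
        (Z⁻¹ * Real.exp (1 / (2 * D) * Matrix.trace ((Λ0.val)ᵀ * A.val))) * ψ A) μ :=
      hψint.bdd_mul hMcont.aestronglyMeasurable (Filter.Eventually.of_forall (cont_bound _ hMcont).choose_spec)
    have hfψ : Integrable (fun A => f A * ψ A) μ := integrable_L2_mul μ f ψ hfL2 hψ
    have hexp : ∫ A, ((∫ B, f B ∂μ) *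
          (Z⁻¹ * Real.exp (1 / (2 * D) * Matrix.trace ((Λ0.val)ᵀ * A.val))) - f A) * ψ A ∂μ
        = (∫ B, f B ∂μ) * c - ∫ A, f A * ψ A ∂μ := by
      have e : ∀ A : SO3T, ((∫ B, f B ∂μ) *
            (Z⁻¹ * Real.exp (1 / (2 * D) * Matrix.trace ((Λ0.val)ᵀ * A.val))) - f A) * ψ A
          = (∫ B, f B ∂μ) *
            ((Z⁻¹ * Real.exp (1 / (2 * D) * Matrix.trace ((Λ0.val)ᵀ * A.val))) * ψ A)
            - f A * ψ A := fun A => by ring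
      simp only [e]
      rw [integral_sub (hMψ.const_mul _) hfψ, integral_const_mul, ← hc]
    rw [hexp] at hHf
    -- split ∫ fψ
    have hψeq : ∀ A : SO3T, ψ A = f A + c + phi Λ0 P A := by
      intro A; rw [hfdef]; ring
    have hIff : Integrable (fun A => f A * f A) μ := integrable_L2_mul μ f f hfL2 hfL2
    have hIcf : Integrable (fun A => c * f A) μ := hfint.const_mul c
    have hIfp : Integrable (fun A => f A * phi Λ0 P A) μ :=
      integrable_L2_mul μ f _ hfL2 hphiL2
    have hsplit : ∫ A, f A * ψ A ∂μ
        = (∫ A, f A * f A ∂μ) + (∫ A, c * f A ∂μ) + ∫ A, f A * phi Λ0 P A ∂μ := by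
      have e : ∀ A : SO3T, f A * ψ A = f A * f A + c * f A + f A * phi Λ0 P A := by
        intro A; rw [hψeq A]; ring
      simp only [e]
      have i1 : ∫ A, ((f A * f A + c * f A) + f A * phi Λ0 P A) ∂μ
          = (∫ A, (f A * f A + c * f A) ∂μ) + ∫ A, f A * phi Λ0 P A ∂μ :=
        integral_add (hIff.add hIcf) hIfp
      have i2 : ∫ A, (f A * f A + c * f A) ∂μ
          = (∫ A, f A * f A ∂μ) + ∫ A, c * f A ∂μ := integral_add hIff hIcf
      rw [i1, i2]
    rw [hsplit, hforth P hPanti, integral_const_mul] at hHf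
    have hff : ∫ A, f A * f A ∂μ = 0 := by linear_combination -hHf
    have hzero : ∀ᵐ A ∂μ, f A = 0 := by
      have h0 : (fun A => f A * f A) =ᵐ[μ] 0 :=
        (integral_eq_zero_iff_of_nonneg (fun A => mul_self_nonneg (f A)) hIff).mp hff
      filter_upwards [h0] with A hA
      exact mul_self_eq_zero.mp hA
    refine ⟨c, P, hPanti, ?_⟩
    filter_upwards [hzero] with A hA
    have h4 : ψ A = f A + c + phi Λ0 P A := hψeq A
    rw [hA, zero_add] at h4
    exact h4
  · -- backward direction
    rintro ⟨c, P, hP, hae⟩ f hf hforth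
    have hfint : Integrable f μ := hf.integrable (by norm_num)
    have hfphi0 : ∫ A, f A * phi Λ0 P A ∂μ = 0 := hforth P hP
    have hcongr : ∫ A, ((∫ B, f B ∂μ) *
          (Z⁻¹ * Real.exp (1 / (2 * D) * Matrix.trace ((Λ0.val)ᵀ * A.val))) - f A) * ψ A ∂μ
        = ∫ A, ((∫ B, f B ∂μ) *
          (Z⁻¹ * Real.exp (1 / (2 * D) * Matrix.trace ((Λ0.val)ᵀ * A.val))) - f A)
            * (c + phi Λ0 P A) ∂μ := by
      apply integral_congr_ae
      filter_upwards [hae] with A hA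
      rw [hA]
      rfl
    rw [hcongr]
    have hIM : Integrable (fun A =>
        c * (Z⁻¹ * Real.exp (1 / (2 * D) * Matrix.trace ((Λ0.val)ᵀ * A.val)))
        + (Z⁻¹ * Real.exp (1 / (2 * D) * Matrix.trace ((Λ0.val)ᵀ * A.val)))
          * phi Λ0 P A) μ := by
      apply Integrable.add
      · exact (integrable_cont μ _ hMcont).const_mul c
      · exact integrable_cont μ _ (hMcont.mul (continuous_phi Λ0 P))
    have hIf2 : Integrable (fun A => c * f A + f A * phi Λ0 P A) μ :=
      (hfint.const_mul c).add (integrable_L2_mul μ f _ hf (memLp_cont μ _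
        (continuous_phi Λ0 P) 2))
    have e : ∀ A : SO3T, ((∫ B, f B ∂μ) *
          (Z⁻¹ * Real.exp (1 / (2 * D) * Matrix.trace ((Λ0.val)ᵀ * A.val))) - f A)
            * (c + phi Λ0 P A)
        = (∫ B, f B ∂μ) *
            (c * (Z⁻¹ * Real.exp (1 / (2 * D) * Matrix.trace ((Λ0.val)ᵀ * A.val)))
              + (Z⁻¹ * Real.exp (1 / (2 * D) * Matrix.trace ((Λ0.val)ᵀ * A.val)))
                * phi Λ0 P A)
          - (c * f A + f A * phi Λ0 P A) := fun A => by ring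
    simp only [e]
    rw [integral_sub (hIM.const_mul _) hIf2, integral_const_mul]
    rw [integral_add ((integrable_cont μ _ hMcont).const_mul c)
      (integrable_cont μ (fun A => Z⁻¹ * Real.exp (1 / (2 * D) * Matrix.trace ((Λ0.val)ᵀ * A.val)) * phi Λ0 P A) (hMcont.mul (continuous_phi Λ0 P)))]
    rw [integral_add (hfint.const_mul c)
      (integrable_L2_mul μ f _ hf (memLp_cont μ _ (continuous_phi Λ0 P) 2))]
    have j1 : ∫ A, c * (Z⁻¹ * Real.exp (1 / (2 * D) * Matrix.trace ((Λ0.val)ᵀ * A.val))) ∂μ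
        = c * ∫ A, Z⁻¹ * Real.exp (1 / (2 * D) * Matrix.trace ((Λ0.val)ᵀ * A.val)) ∂μ :=
      integral_const_mul _ _
    have j2 : ∫ A, c * f A ∂μ = c * ∫ A, f A ∂μ := integral_const_mul _ _
    rw [j1, hMint, hMphi P hP, j2, hfphi0]
    ring
/-- Description of the set of Generalized Collision Invariants of the jump collision operator
`Γ_{Λ₀}(f) = (∫ f dμ) M_{Λ₀} - f`: a function `ψ ∈ L²(μ)` is a GCI associated with
`Λ₀ ∈ SO₃(ℝ)` if and only if it is (μ-a.e.) of the form `A ↦ c + ½ Tr(Pᵀ Λ₀ᵀ A)` for some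
`c ∈ ℝ` and some antisymmetric matrix `P`; i.e. `GCI(Λ₀)` is the linear span of the constant
function `1` and the functions `ψ^P_{Λ₀}(A) = ½ Tr(Pᵀ Λ₀ᵀ A)`, `P` antisymmetric.  Here `μ`
is the Haar probability measure of `SO₃(ℝ)` (characterized by left invariance) and
`M_Λ(A) = Z⁻¹ exp(Tr(Λᵀ A)/(2D))`. -/
theorem GCI_description_jump_model (D : ℝ) (hD : 0 < D)
    (μ : Measure SO3T) [IsProbabilityMeasure μ]
    (hinv : ∀ g : SO3T, μ.map (fun A => g * A) = μ)
    (Z : ℝ) (hZ : Z = ∫ A : SO3T, Real.exp (1 / (2 * D) * Matrix.trace A.val) ∂μ)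
    (Λ0 : SO3T) (ψ : SO3T → ℝ) (hψ : MemLp ψ 2 μ) :
    (∀ f : SO3T → ℝ, MemLp f 2 μ →
        (∀ P : Mat3, Pᵀ = -P →
          ∫ A, f A * ((1 / 2 : ℝ) * Matrix.trace (Pᵀ * (Λ0.val)ᵀ * A.val)) ∂μ = 0) →
        ∫ A, ((∫ B, f B ∂μ) *
            (Z⁻¹ * Real.exp (1 / (2 * D) * Matrix.trace ((Λ0.val)ᵀ * A.val))) - f A) * ψ A ∂μ
          = 0)
      ↔ ∃ (c : ℝ) (P : Mat3), Pᵀ = -P ∧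
          ∀ᵐ A ∂μ, ψ A = c + (1 / 2 : ℝ) * Matrix.trace (Pᵀ * (Λ0.val)ᵀ * A.val) := by
  exact GCI_description_jump_model' D hD μ hinv Z hZ Λ0 ψ hψ
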